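/- Let M be a positive integer, A, B finite subsets of ℤ/Mℤ with A ⊕ B = ℤ/Mℤ (every element of ℤ/Mℤ is uniquely a + b with a ∈ A, b ∈ B), and let ψ : ℤ/Mℤ → ℤ/Mℤ be a divisor isometry. Then ψ(A) ⊕ B = ℤ/Mℤ is also a tiling. -/

import Mathlib

open Finset


lemma coeff_sum_single {p : ℕ} {G ι : Type*} [AddCommGroup G] [DecidableEq G]
    (S : Finset ι) (f : ι → (ZMod M)) (c : ZMod M) :
    (∑ w ∈ S, AddMonoidAlgebra.single (f w) (1 : ZMod p)).coeff c
      = ((S.filter (fun w => f w = c)).card : ZMod p) := by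
  classical
  rw [AddMonoidAlgebra.coeff_sum, Finset.sum_apply', Finset.card_filter]
  push_cast
  refine Finset.sum_congr rfl fun w _ => ?_
  simp [AddMonoidAlgebra.coeff_single, Finsupp.single_apply]

lemma tiling_step {M : ℕ} [NeZero M] (A B : Finset (ZMod M))
    (hAB : A.card * B.card = M) (p : ℕ) (hp : p.Prime) (hpB : ¬ p ∣ B.card) (k : ℕ)
    (hk : ∀ z : ZMod M,
      ((A ×ˢ B).filter (fun ab => ab.1 + (k : ZMod M) * ab.2 = z)).card = 1) :
    ∀ z : ZMod M,
      ((A ×ˢ B).filter (fun ab => ab.1 + ((p * k : ℕ) : ZMod M) * ab.2 = z)).card = 1 := by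
  classical
  haveI : Fact p.Prime := ⟨hp⟩
  haveI hchar : CharP (AddMonoidAlgebra (ZMod p) (ZMod M)) p :=
    charP_of_injective_ringHom (f := AddMonoidAlgebra.singleZeroRingHom)
      (fun r s h => Finsupp.single_injective 0 (congrArg AddMonoidAlgebra.coeff h)) p
  set a : AddMonoidAlgebra (ZMod p) (ZMod M) := ∑ x ∈ A, AddMonoidAlgebra.single x (1 : ZMod p) with ha
  set T : AddMonoidAlgebra (ZMod p) (ZMod M) := ∑ z : ZMod M, AddMonoidAlgebra.single z (1 : ZMod p) with hTdef
  have hprod : ∀ u : ℕ, (a * ∑ y ∈ B, AddMonoidAlgebra.single ((u : ZMod M) * y) (1 : ZMod p))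
      = ∑ ab ∈ A ×ˢ B, AddMonoidAlgebra.single (ab.1 + (u : ZMod M) * ab.2) (1 : ZMod p) := by
    intro u
    rw [ha, Finset.sum_mul_sum, Finset.sum_product]
    refine Finset.sum_congr rfl fun x _ => Finset.sum_congr rfl fun y _ => ?_
    simp [AddMonoidAlgebra.single_mul_single]
  set bk : AddMonoidAlgebra (ZMod p) (ZMod M) := ∑ y ∈ B, AddMonoidAlgebra.single ((k : ZMod M) * y) (1 : ZMod p) with hbk
  have hab : a * bk = T := by
    refine AddMonoidAlgebra.ext (Finsupp.ext fun c => ?_)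
    rw [hbk, hprod k, hTdef]
    rw [coeff_sum_single (p := p) (G := ZMod M) (A ×ˢ B) (fun ab => ab.1 + (k : ZMod M) * ab.2) c, hk c]
    rw [coeff_sum_single (p := p) (G := ZMod M) Finset.univ (fun z => z) c]
    simp [Finset.filter_eq']
  have hbp : bk ^ p = ∑ y ∈ B, AddMonoidAlgebra.single (((p * k : ℕ) : ZMod M) * y) (1 : ZMod p) := by
    rw [hbk, sum_pow_char]
    refine Finset.sum_congr rfl fun y _ => ?_
    rw [AddMonoidAlgebra.single_pow, one_pow]
    congr 1
    push_cast [nsmul_eq_mul]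
    ring
  have hTg : ∀ g : ZMod M, T * AddMonoidAlgebra.single g (1 : ZMod p) = T := by
    intro g
    rw [hTdef, Finset.sum_mul]
    have h1 : ∀ z : ZMod M, AddMonoidAlgebra.single z (1 : ZMod p) * AddMonoidAlgebra.single g (1 : ZMod p) = AddMonoidAlgebra.single (z + g) (1 : ZMod p) := by
      intro z; simp [AddMonoidAlgebra.single_mul_single]
    rw [Finset.sum_congr rfl fun z _ => h1 z]
    exact Fintype.sum_bijective (fun z : ZMod M => z + g) (Equiv.addRight g).bijective _ _
      (fun z => rfl)
  have hTbk : T * bk = (B.card : ZMod p) • T := by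
    rw [hbk, Finset.mul_sum]
    rw [Finset.sum_congr rfl fun y _ => hTg ((k : ZMod M) * y)]
    rw [Finset.sum_const, Nat.cast_smul_eq_nsmul]
  have hTpow : ∀ j : ℕ, T * bk ^ j = ((B.card : ZMod p) ^ j) • T := by
    intro j
    induction j with
    | zero => simp
    | succ n ih =>
      rw [pow_succ, ← mul_assoc, ih, smul_mul_assoc, hTbk, smul_smul, pow_succ]
  have hB0 : (B.card : ZMod p) ≠ 0 := by
    rw [Ne, ZMod.natCast_eq_zero_iff]; exact hpB
  have hfinal : (a * ∑ y ∈ B, AddMonoidAlgebra.single (((p * k : ℕ) : ZMod M) * y) (1 : ZMod p)) = T := by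
    rw [← hbp]
    have hp1 : p - 1 + 1 = p := Nat.succ_pred_eq_of_pos hp.pos
    have hsplit : bk ^ p = bk ^ (p - 1) * bk := by rw [← pow_succ, hp1]
    calc a * bk ^ p = (a * bk) * bk ^ (p - 1) := by
          rw [hsplit]; ring
      _ = T * bk ^ (p - 1) := by rw [hab]
      _ = ((B.card : ZMod p) ^ (p - 1)) • T := hTpow (p - 1)
      _ = T := by rw [ZMod.pow_card_sub_one_eq_one hB0, one_smul]
  have key : ∀ z : ZMod M,
      (((A ×ˢ B).filter (fun ab => ab.1 + ((p * k : ℕ) : ZMod M) * ab.2 = z)).card : ZMod p) = 1 := by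
    intro z
    have h1 := Finsupp.ext_iff.mp (congrArg AddMonoidAlgebra.coeff hfinal) z
    rw [hprod (p * k)] at h1
    rw [coeff_sum_single (p := p) (G := ZMod M) (A ×ˢ B) (fun ab => ab.1 + ((p * k : ℕ) : ZMod M) * ab.2) z] at h1
    rw [hTdef, coeff_sum_single (p := p) (G := ZMod M) Finset.univ (fun w => w) z] at h1
    simpa [Finset.filter_eq'] using h1
  have hge : ∀ z : ZMod M, 1 ≤ ((A ×ˢ B).filter (fun ab => ab.1 + ((p * k : ℕ) : ZMod M) * ab.2 = z)).card := by
    intro z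
    rcases Nat.eq_zero_or_pos ((A ×ˢ B).filter (fun ab => ab.1 + ((p * k : ℕ) : ZMod M) * ab.2 = z)).card with h0 | h
    · exfalso; have := key z; rw [h0] at this; simp at this
    · exact h
  have hsum : ∑ z : ZMod M, ((A ×ˢ B).filter (fun ab => ab.1 + ((p * k : ℕ) : ZMod M) * ab.2 = z)).card
      = (A ×ˢ B).card :=
    (Finset.card_eq_sum_card_fiberwise (fun ab _ => Finset.mem_univ _)).symm
  have hMcard : (Finset.univ : Finset (ZMod M)).card = M := by
    rw [Finset.card_univ]; exact ZMod.card M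
  have heq : ∑ z : ZMod M, (1 : ℕ) = ∑ z : ZMod M, ((A ×ˢ B).filter (fun ab => ab.1 + ((p * k : ℕ) : ZMod M) * ab.2 = z)).card := by
    rw [hsum, Finset.sum_const, smul_eq_mul, mul_one, hMcard, Finset.card_product, hAB]
  intro z
  exact ((Finset.sum_eq_sum_iff_of_le (fun i _ => hge i)).mp heq z (Finset.mem_univ z)).symm

lemma exists_unit_mul {M : ℕ} [NeZero M] (x y : ZMod M)
    (h : Nat.gcd x.val M = Nat.gcd y.val M) :
    ∃ u : ℕ, Nat.Coprime u M ∧ (u : ZMod M) * y = x := by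
  set d := Nat.gcd y.val M with hd
  have hdM : d ∣ M := Nat.gcd_dvd_right _ _
  have hdx : d ∣ x.val := h ▸ Nat.gcd_dvd_left x.val M
  have hdy : d ∣ y.val := Nat.gcd_dvd_left _ _
  have hM0 : 0 < M := NeZero.pos M
  have hd0 : 0 < d := Nat.gcd_pos_of_pos_right _ hM0
  set n := M / d with hn
  have hnM : n ∣ M := Nat.div_dvd_of_dvd hdM
  have hn0 : 0 < n := Nat.div_pos (Nat.le_of_dvd hM0 hdM) hd0
  haveI : NeZero n := ⟨hn0.ne'⟩
  have hs : Nat.Coprime (x.val / d) n := by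
    have h0 : 0 < Nat.gcd x.val M := h ▸ hd0
    have := Nat.coprime_div_gcd_div_gcd (m := x.val) (n := M) h0
    rwa [h] at this
  have ht : Nat.Coprime (y.val / d) n := Nat.coprime_div_gcd_div_gcd (hd ▸ hd0)
  -- build the unit
  let S : (ZMod n)ˣ := ZMod.unitOfCoprime _ hs
  let Tt : (ZMod n)ˣ := ZMod.unitOfCoprime _ ht
  obtain ⟨U, hU⟩ := ZMod.unitsMap_surjective hnM (S * Tt⁻¹)
  refine ⟨(U : ZMod M).val, ZMod.val_coe_unit_coprime U, ?_⟩
  have hcast : (((U : ZMod M).val : ℕ) : ZMod n) = ((S * Tt⁻¹ : (ZMod n)ˣ) : ZMod n) := by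
    rw [← hU]
    rw [ZMod.natCast_val]
    rfl
  have hmuln : (((U : ZMod M).val * (y.val / d) : ℕ) : ZMod n) = ((x.val / d : ℕ) : ZMod n) := by
    push_cast
    rw [hcast]
    have h1 : ((y.val / d : ℕ) : ZMod n) = (Tt : ZMod n) := (ZMod.coe_unitOfCoprime _ ht).symm
    have h2 : ((x.val / d : ℕ) : ZMod n) = (S : ZMod n) := (ZMod.coe_unitOfCoprime _ hs).symm
    rw [h1, h2]
    calc ((S * Tt⁻¹ : (ZMod n)ˣ) : ZMod n) * (Tt : ZMod n)
        = ((S * Tt⁻¹ * Tt : (ZMod n)ˣ) : ZMod n) := by push_cast; ring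
      _ = (S : ZMod n) := by rw [inv_mul_cancel_right]
  have hmod : (U : ZMod M).val * (y.val / d) ≡ x.val / d [MOD n] :=
    (ZMod.natCast_eq_natCast_iff _ _ _).mp hmuln
  have hmod2 : d * ((U : ZMod M).val * (y.val / d)) ≡ d * (x.val / d) [MOD d * n] :=
    hmod.mul_left' d
  have hdn : d * n = M := Nat.mul_div_cancel' hdM
  have hxv : d * (x.val / d) = x.val := Nat.mul_div_cancel' hdx
  have hyv : d * (y.val / d) = y.val := Nat.mul_div_cancel' hdy
  have hmod3 : (U : ZMod M).val * y.val ≡ x.val [MOD M] := by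
    have h5 : d * ((U : ZMod M).val * (y.val / d)) = (U : ZMod M).val * (d * (y.val / d)) := by
      ring
    rw [h5, hyv] at hmod2
    rwa [hxv, hdn] at hmod2
  have heq := (ZMod.natCast_eq_natCast_iff _ _ _).mpr hmod3
  push_cast at heq
  simp only [ZMod.natCast_val, ZMod.cast_id] at heq ⊢
  exact heq

lemma til_all {M : ℕ} [NeZero M] (A B : Finset (ZMod M))
    (hAB : A.card * B.card = M)
    (base : ∀ z : ZMod M,
      ((A ×ˢ B).filter (fun ab => ab.1 + ((1 : ℕ) : ZMod M) * ab.2 = z)).card = 1)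
    (u : ℕ) (hu : 0 < u) (hcop : Nat.Coprime u B.card) :
    ∀ z : ZMod M,
      ((A ×ˢ B).filter (fun ab => ab.1 + (u : ZMod M) * ab.2 = z)).card = 1 := by
  revert hu hcop
  induction u using Nat.strong_induction_on with
  | _ u ih =>
    intro hu hcop
    by_cases hu1 : u = 1
    · subst hu1; exact base
    · have hp : u.minFac.Prime := Nat.minFac_prime hu1
      obtain ⟨v, hv⟩ := Nat.minFac_dvd u
      have hv0 : 0 < v := by
        rcases Nat.eq_zero_or_pos v with h0 | h
        · subst h0; rw [Nat.mul_zero] at hv; omega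
        · exact h
      have hvlt : v < u := by
        rw [hv]
        calc v = 1 * v := (one_mul v).symm
          _ < u.minFac * v := by
              exact (Nat.mul_lt_mul_right hv0).mpr hp.one_lt
      have hvcop : Nat.Coprime v B.card :=
        Nat.Coprime.coprime_dvd_left (Dvd.intro_left u.minFac hv.symm) hcop
      have hpB : ¬ u.minFac ∣ B.card := by
        intro hdvd
        have h1 : u.minFac ∣ Nat.gcd u B.card := Nat.dvd_gcd (Nat.minFac_dvd u) hdvd
        rw [hcop] at h1
        exact hp.one_lt.ne' (Nat.eq_one_of_dvd_one h1)
      have step := tiling_step A B hAB u.minFac hp hpB v (ih v hvlt hv0 hvcop)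
      rw [← hv] at step
      exact step

/-- `A ⊕ B = ℤ_M`: every element has a unique representation `a + b`, `a ∈ A`, `b ∈ B`. -/
def IsTiling {M : ℕ} (A B : Finset (ZMod M)) : Prop :=
  ∀ z : ZMod M, ∃! ab : ZMod M × ZMod M, ab.1 ∈ A ∧ ab.2 ∈ B ∧ ab.1 + ab.2 = z

theorem divisor_isometry_preserves_tiling (M : ℕ) (hM : 0 < M)
    (A B : Finset (ZMod M)) (hT : IsTiling A B)
    (ψ : ZMod M → ZMod M)
    (hψ : ∀ x x' : ZMod M, Nat.gcd (ψ x - ψ x').val M = Nat.gcd (x - x').val M) :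
    IsTiling (A.image ψ) B := by
  haveI : NeZero M := ⟨hM.ne'⟩
  classical
  -- ψ is injective
  have hinj : Function.Injective ψ := by
    intro x x' hxx
    have h := hψ x x'
    rw [hxx, sub_self, ZMod.val_zero, Nat.gcd_zero_left] at h
    have hdvd : M ∣ (x - x').val := by
      have hg2 := Nat.gcd_dvd_left (x - x').val M
      rwa [← h] at hg2
    have h0 : (x - x').val = 0 := Nat.eq_zero_of_dvd_of_lt hdvd (ZMod.val_lt _)
    exact sub_eq_zero.mp ((ZMod.val_eq_zero (x - x')).mp h0)
  -- base count
  have base : ∀ z : ZMod M,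
      ((A ×ˢ B).filter (fun ab => ab.1 + ((1 : ℕ) : ZMod M) * ab.2 = z)).card = 1 := by
    intro z
    obtain ⟨ab₀, h₀, huniq⟩ := hT z
    rw [Finset.card_eq_one]
    refine ⟨ab₀, Finset.eq_singleton_iff_unique_mem.mpr ⟨?_, ?_⟩⟩
    · rw [Finset.mem_filter, Finset.mem_product]
      refine ⟨⟨h₀.1, h₀.2.1⟩, by simpa using h₀.2.2⟩
    · intro ab hab
      rw [Finset.mem_filter, Finset.mem_product] at hab
      exact huniq ab ⟨hab.1.1, hab.1.2, by simpa using hab.2⟩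
  -- cardinality
  have hAB : A.card * B.card = M := by
    have h1 := Finset.card_eq_sum_card_fiberwise
      (f := fun ab : ZMod M × ZMod M => ab.1 + ((1 : ℕ) : ZMod M) * ab.2)
      (s := A ×ˢ B) (t := Finset.univ) (fun ab _ => Finset.mem_univ _)
    simp only [base] at h1
    rw [Finset.card_product] at h1
    rw [h1, Finset.sum_const, smul_eq_mul, mul_one, Finset.card_univ, ZMod.card]
  -- key injectivity
  have key : ∀ a₁ ∈ A, ∀ a₂ ∈ A, ∀ b₁ ∈ B, ∀ b₂ ∈ B,
      ψ a₁ + b₁ = ψ a₂ + b₂ → a₁ = a₂ ∧ b₁ = b₂ := by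
    intro a₁ ha₁ a₂ ha₂ b₁ hb₁ b₂ hb₂ heq
    by_cases haa : a₁ = a₂
    · subst haa
      refine ⟨rfl, by exact add_left_cancel heq⟩
    · exfalso
      have hx : a₁ - a₂ ≠ 0 := sub_ne_zero.mpr haa
      have hy : ψ a₁ - ψ a₂ = b₂ - b₁ := by linear_combination heq
      have hg : Nat.gcd (a₁ - a₂).val M = Nat.gcd (b₂ - b₁).val M := by
        rw [← hy, hψ a₁ a₂]
      obtain ⟨u, hcopM, hux⟩ := exists_unit_mul (a₁ - a₂) (b₂ - b₁) hg
      have hBdvd : B.card ∣ M := ⟨A.card, by rw [mul_comm]; exact hAB.symm⟩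
      have hcopB : Nat.Coprime u B.card := Nat.Coprime.coprime_dvd_right hBdvd hcopM
      have hu0 : 0 < u := by
        rcases Nat.eq_zero_or_pos u with h0 | h
        · exfalso
          subst h0
          have hM1 : M = 1 := (Nat.coprime_zero_left M).mp hcopM
          subst hM1
          exact hx (Subsingleton.elim _ _)
        · exact h
      have til := til_all A B hAB base u hu0 hcopB (a₁ + (u : ZMod M) * b₁)
      have hmem1 : (a₁, b₁) ∈ (A ×ˢ B).filter
          (fun ab => ab.1 + (u : ZMod M) * ab.2 = a₁ + (u : ZMod M) * b₁) := by
        rw [Finset.mem_filter, Finset.mem_product]; exact ⟨⟨ha₁, hb₁⟩, rfl⟩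
      have hmem2 : (a₂, b₂) ∈ (A ×ˢ B).filter
          (fun ab => ab.1 + (u : ZMod M) * ab.2 = a₁ + (u : ZMod M) * b₁) := by
        rw [Finset.mem_filter, Finset.mem_product]
        refine ⟨⟨ha₂, hb₂⟩, ?_⟩
        linear_combination hux
      have := Finset.card_le_one.mp til.le _ hmem1 _ hmem2
      exact haa (congrArg Prod.fst this)
  -- build the tiling
  have hcard_img : (A.image ψ).card = A.card := Finset.card_image_of_injective A hinj
  have hSinj : Set.InjOn (fun ab : ZMod M × ZMod M => ab.1 + ab.2)
      ((A.image ψ) ×ˢ B : Finset (ZMod M × ZMod M)) := by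
    rintro ⟨c₁, d₁⟩ h₁ ⟨c₂, d₂⟩ h₂ hsum
    simp only [Finset.coe_product, Set.mem_prod, Finset.mem_coe, Finset.mem_image] at h₁ h₂
    obtain ⟨⟨x₁, hx₁, rfl⟩, hd₁⟩ := h₁
    obtain ⟨⟨x₂, hx₂, rfl⟩, hd₂⟩ := h₂
    obtain ⟨hxe, hde⟩ := key x₁ hx₁ x₂ hx₂ d₁ hd₁ d₂ hd₂ hsum
    rw [hxe, hde]
  have hcardS : ((A.image ψ) ×ˢ B).card = M := by
    rw [Finset.card_product, hcard_img, hAB]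
  have himg : ((A.image ψ) ×ˢ B).image (fun ab : ZMod M × ZMod M => ab.1 + ab.2)
      = Finset.univ := by
    apply Finset.eq_univ_of_card
    rw [Finset.card_image_of_injOn hSinj, hcardS, ZMod.card]
  intro z
  have hz : z ∈ ((A.image ψ) ×ˢ B).image (fun ab : ZMod M × ZMod M => ab.1 + ab.2) := by
    rw [himg]; exact Finset.mem_univ z
  obtain ⟨ab, habS, habz⟩ := Finset.mem_image.mp hz
  rw [Finset.mem_product] at habS
  refine ⟨ab, ⟨habS.1, habS.2, habz⟩, ?_⟩
  rintro ab' ⟨h1', h2', h3'⟩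
  refine hSinj ?_ ?_ (by simpa using h3'.trans habz.symm)
  · rw [Finset.coe_product]; exact Set.mem_prod.mpr ⟨h1', h2'⟩
  · rw [Finset.coe_product]; exact Set.mem_prod.mpr ⟨habS.1, habS.2⟩
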